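/- Let n ≥ 1, L > 0, and y = (y_1,...,y_n) ∈ (ℝ^d)^n. Set R(y) = max_{1≤i,j≤n} |y_i - y_j|_∞ + 5nL. Then for any x = (x_1,...,x_n) ∈ (ℝ^d)^n with |x - y|_∞ ≥ R(y), there exists a nonempty subset J ⊆ {1,...,n} such that the union Λ := ∪_{i∈J} C_L(x_i) is a maximal connected component of ∪_{i=1}^n C_L(x_i) and Λ is disjoint from ∪_{j=1}^n C_L(y_j). -/

import Mathlib

open Metric Set

section aux

variable {n : ℕ} {d : ℕ} {L : ℝ}

/-- The intersection graph of the cubes. -/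
private def cubeGraph (x : Fin n → Fin d → ℝ) (L : ℝ) : SimpleGraph (Fin n) where
  Adj i j := i ≠ j ∧ dist (x i) (x j) ≤ 2 * L
  symm := by
    refine ⟨fun i j ⟨h1, h2⟩ => ?_⟩
    exact ⟨h1.symm, by rwa [dist_comm]⟩
  loopless := by refine ⟨fun i ⟨h1, _⟩ => ?_⟩; exact h1 rfl

private lemma walk_dist_le (x : Fin n → Fin d → ℝ) (L : ℝ) (hL : 0 < L)
    {u v : Fin n} (p : (cubeGraph x L).Walk u v) :
    dist (x u) (x v) ≤ 2 * L * p.length := by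
  induction p with
  | nil => simp
  | cons h p ih =>
    rename_i a b c
    calc dist (x a) (x c) ≤ dist (x a) (x b) + dist (x b) (x c) := dist_triangle _ _ _
      _ ≤ 2 * L + 2 * L * p.length := add_le_add h.2 ih
      _ = 2 * L * (p.length + 1) := by ring
      _ = 2 * L * (SimpleGraph.Walk.cons h p).length := by
          rw [SimpleGraph.Walk.length_cons]; push_cast; ring

private lemma reachable_dist_le (x : Fin n → Fin d → ℝ) (L : ℝ) (hL : 0 < L)
    {u v : Fin n} (h : (cubeGraph x L).Reachable u v) :
    dist (x u) (x v) ≤ 2 * L * (n - 1 : ℕ) := by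
  obtain ⟨p⟩ := h
  have hp := p.toPath.2
  have hlen : (p.toPath : (cubeGraph x L).Walk u v).length < n := by
    simpa using hp.length_lt
  calc dist (x u) (x v) ≤ 2 * L * (p.toPath : (cubeGraph x L).Walk u v).length :=
        walk_dist_le x L hL _
    _ ≤ 2 * L * (n - 1 : ℕ) := by
        apply mul_le_mul_of_nonneg_left _ (by linarith)
        exact_mod_cast Nat.cast_le.2 (Nat.le_sub_one_of_lt hlen)

end aux

/-- If `|x - y|_∞ ≥ R(y) = diam{y_1,...,y_n} + 5nL`, then some maximal
connected component of the union of the cubes `C_L(x_i)` (a union over a nonempty index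
set `J`) is disjoint from the union of the cubes `C_L(y_j)`. -/
theorem separable_component_exists
    (d n : ℕ) (hn : 1 ≤ n) (L : ℝ) (hL : 0 < L)
    (x y : Fin n → Fin d → ℝ) (R : ℝ)
    (hR : R = (⨆ i, ⨆ j, dist (y i) (y j)) + 5 * n * L)
    (hxy : R ≤ dist x y) :
    ∃ J : Set (Fin n), J.Nonempty ∧
      (∃ z ∈ (⋃ i ∈ J, closedBall (x i) L),
        (⋃ i ∈ J, closedBall (x i) L) =
          connectedComponentIn (⋃ i, closedBall (x i) L) z) ∧
      ((⋃ i ∈ J, closedBall (x i) L) ∩ ⋃ j, closedBall (y j) L) = ∅ := by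
  have hne : Nonempty (Fin n) := ⟨⟨0, hn⟩⟩
  set D : ℝ := ⨆ i, ⨆ j, dist (y i) (y j) with hD
  -- D bounds pairwise distances of the y's
  have hDle : ∀ i j, dist (y i) (y j) ≤ D := by
    intro i j
    have h1 : dist (y i) (y j) ≤ ⨆ j', dist (y i) (y j') :=
      le_ciSup (f := fun j' => dist (y i) (y j')) (Set.Finite.bddAbove (Set.finite_range _)) j
    exact h1.trans (le_ciSup (f := fun i => ⨆ j, dist (y i) (y j))
      (Set.Finite.bddAbove (Set.finite_range _)) i)
  have hD0 : 0 ≤ D := le_trans (by simp) (hDle (Classical.arbitrary _) (Classical.arbitrary _))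
  have hnn : (1 : ℝ) ≤ (n : ℝ) := by exact_mod_cast hn
  have hR0 : 0 < R := by nlinarith
  -- choose i₀ with dist (x i₀) (y i₀) ≥ R
  obtain ⟨i₀, hi₀⟩ : ∃ i₀, R ≤ dist (x i₀) (y i₀) := by
    by_contra h
    push_neg at h
    exact absurd ((dist_pi_lt_iff hR0).2 h) (not_lt.2 hxy)
  set U : Set (Fin d → ℝ) := ⋃ i, closedBall (x i) L with hU
  set Λ : Set (Fin d → ℝ) := connectedComponentIn U (x i₀) with hΛ
  have hxiU : ∀ i, x i ∈ U := fun i => mem_iUnion.2 ⟨i, mem_closedBall_self hL.le⟩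
  have hcube_pc : ∀ i : Fin n, IsPreconnected (closedBall (x i) L) :=
    fun i => (convex_closedBall (x i) L).isPreconnected
  have hi₀Λ : x i₀ ∈ Λ := mem_connectedComponentIn (hxiU i₀)
  set J : Set (Fin n) := {i | x i ∈ Λ} with hJ
  -- each cube with index in J is inside Λ
  have hsub : ∀ i ∈ J, closedBall (x i) L ⊆ Λ := by
    intro i hi
    have := connectedComponentIn_eq (F := U) hi
    rw [hΛ, this]
    exact (hcube_pc i).subset_connectedComponentIn (mem_closedBall_self hL.le)
      (subset_iUnion (fun i => closedBall (x i) L) i)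
  have hΛeq : (⋃ i ∈ J, closedBall (x i) L) = Λ := by
    apply Subset.antisymm
    · exact iUnion₂_subset hsub
    · intro p hp
      have hpU : p ∈ U := connectedComponentIn_subset _ _ hp
      obtain ⟨i, hpi⟩ := mem_iUnion.1 hpU
      have hiJ : x i ∈ Λ := by
        have h1 : closedBall (x i) L ⊆ connectedComponentIn U p :=
          (hcube_pc i).subset_connectedComponentIn hpi
            (subset_iUnion (fun i => closedBall (x i) L) i)
        have h2 : connectedComponentIn U p = Λ := by
          rw [hΛ, connectedComponentIn_eq (F := U) hp]
        exact h2 ▸ h1 (mem_closedBall_self hL.le)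
      exact mem_iUnion₂.2 ⟨i, hiJ, hpi⟩
  -- the reachable set A
  set G := cubeGraph x L with hG
  set A : Set (Fin n) := {i | G.Reachable i₀ i} with hA
  set V : Set (Fin d → ℝ) := ⋃ i ∈ A, closedBall (x i) L with hV
  set W : Set (Fin d → ℝ) := ⋃ i ∈ Aᶜ, closedBall (x i) L with hW
  have hVW : Disjoint V W := by
    rw [Set.disjoint_iff_inter_eq_empty]
    ext p
    simp only [hV, hW, mem_inter_iff, mem_iUnion, mem_empty_iff_false, iff_false, not_and]
    rintro ⟨i, hiA, hpi⟩ ⟨j, hjA, hpj⟩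
    apply hjA
    have hdij : dist (x i) (x j) ≤ 2 * L := by
      calc dist (x i) (x j) ≤ dist (x i) p + dist p (x j) := dist_triangle _ _ _
        _ ≤ L + L := by
            rw [mem_closedBall] at hpi hpj
            rw [dist_comm (x i) p]
            exact add_le_add hpi hpj
        _ = 2 * L := by ring
    rcases eq_or_ne i j with rfl | hnij
    · exact hiA
    · exact hiA.trans (SimpleGraph.Adj.reachable ⟨hnij, hdij⟩)
  have hVclosed : IsClosed V :=
    (A.toFinite).isClosed_biUnion (fun i _ => isClosed_closedBall)
  have hWclosed : IsClosed W :=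
    (Aᶜ.toFinite).isClosed_biUnion (fun i _ => isClosed_closedBall)
  have hUVW : U ⊆ V ∪ W := by
    intro p hp
    obtain ⟨i, hpi⟩ := mem_iUnion.1 hp
    by_cases hi : i ∈ A
    · exact Or.inl (mem_iUnion₂.2 ⟨i, hi, hpi⟩)
    · exact Or.inr (mem_iUnion₂.2 ⟨i, hi, hpi⟩)
  -- Λ ⊆ V
  have hΛV : Λ ⊆ V := by
    obtain ⟨u, v, hu, hv, hVu, hWv, huv⟩ := normal_separation hVclosed hWclosed hVW
    have hΛu : Λ ⊆ u := by
      apply (isPreconnected_connectedComponentIn).subset_left_of_subset_union hu hv huv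
      · exact (connectedComponentIn_subset _ _).trans (hUVW.trans (union_subset_union hVu hWv))
      · refine ⟨x i₀, hi₀Λ, hVu ?_⟩
        exact mem_iUnion₂.2 ⟨i₀, SimpleGraph.Reachable.refl _, mem_closedBall_self hL.le⟩
    intro p hp
    rcases hUVW (connectedComponentIn_subset _ _ hp) with h | h
    · exact h
    · exact absurd (hWv h) (Set.disjoint_left.1 huv (hΛu hp))
  -- distance bound for points of Λ
  have hΛdist : ∀ p ∈ Λ, dist p (x i₀) ≤ 2 * L * (n - 1 : ℕ) + L := by
    intro p hp
    obtain ⟨k, hkA, hpk⟩ := mem_iUnion₂.1 (hΛV hp)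
    calc dist p (x i₀) ≤ dist p (x k) + dist (x k) (x i₀) := dist_triangle _ _ _
      _ ≤ L + 2 * L * (n - 1 : ℕ) := by
          refine add_le_add (mem_closedBall.1 hpk) ?_
          rw [dist_comm]
          exact reachable_dist_le x L hL hkA
      _ = 2 * L * (n - 1 : ℕ) + L := by ring
  refine ⟨J, ⟨i₀, hi₀Λ⟩, ⟨x i₀, ?_, ?_⟩, ?_⟩
  · exact hΛeq ▸ hi₀Λ
  · exact hΛeq
  · rw [hΛeq, Set.eq_empty_iff_forall_notMem]
    rintro p ⟨hpΛ, hpy⟩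
    obtain ⟨j, hpj⟩ := mem_iUnion.1 hpy
    have h1 : dist p (x i₀) ≤ 2 * L * (n - 1 : ℕ) + L := hΛdist p hpΛ
    have h2 : dist p (y j) ≤ L := mem_closedBall.1 hpj
    have h3 : dist (y j) (y i₀) ≤ D := hDle j i₀
    have h4 : dist (x i₀) (y i₀) ≤ dist (x i₀) p + dist p (y j) + dist (y j) (y i₀) := by
      calc dist (x i₀) (y i₀) ≤ dist (x i₀) (y j) + dist (y j) (y i₀) := dist_triangle _ _ _
        _ ≤ dist (x i₀) p + dist p (y j) + dist (y j) (y i₀) := by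
            have := dist_triangle (x i₀) p (y j)
            linarith
    rw [dist_comm (x i₀) p] at h4
    have hn1 : ((n - 1 : ℕ) : ℝ) ≤ (n : ℝ) - 1 := by
      rw [Nat.cast_sub hn]; simp
    nlinarith [hi₀]
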